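/- arXiv:1204.5672 — 5 statements merged into one kernel-verified Lean document; each statement's English description precedes it below -/
import Mathlib

section
/- Let M be a preGarside monoid and let X be a nonempty subset of M. (1) The set {a ∈ M : a ⪯_L x for all x ∈ X} has a greatest element (for the order ⪯_L), denoted ∧_L X; similarly the set {a ∈ M : a ⪯_R x for all x ∈ X} has a greatest element (for ⪯_R), denoted ∧_R X. (2) If the set {a ∈ M : x ⪯_L a for all x ∈ X} is nonempty, then it has a least element (for ⪯_L), denoted ∨_L X; similarly, if {a ∈ M : x ⪯_R a for all x ∈ X} is nonempty, it has a least element (for ⪯_R), denoted ∨_R X. -/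
namespace PG

variable {M : Type*} [Monoid M]

/-- `LDvd a b` : `a` left-divides `b`. -/
def LDvd (a b : M) : Prop := ∃ c, b = a * c

/-- `RDvd a b` : `a` right-divides `b`. -/
def RDvd (a b : M) : Prop := ∃ c, b = c * a

/-- A monoid is cancellative if `c * a * d = c * b * d` implies `a = b`. -/
def IsCancellative (M : Type*) [Monoid M] : Prop :=
  ∀ a b c d : M, c * a * d = c * b * d → a = b

/-- A monoid is atomic if it admits a norm `ν : M → ℕ` with `ν a > 0` for `a ≠ 1`
and `ν (a * b) ≥ ν a + ν b`. -/
def IsAtomicMon (M : Type*) [Monoid M] : Prop :=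
  ∃ ν : M → ℕ, (∀ a : M, a ≠ 1 → 0 < ν a) ∧ ∀ a b : M, ν a + ν b ≤ ν (a * b)

/-- `m` is the least common multiple of `a` and `b` for left-divisibility. -/
def IsLcmL (a b m : M) : Prop :=
  LDvd a m ∧ LDvd b m ∧ ∀ c : M, LDvd a c → LDvd b c → LDvd m c

/-- `m` is the least common multiple of `a` and `b` for right-divisibility. -/
def IsLcmR (a b m : M) : Prop :=
  RDvd a m ∧ RDvd b m ∧ ∀ c : M, RDvd a c → RDvd b c → RDvd m c

/-- `d` is the greatest common left-divisor of `a` and `b`. -/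
def IsGcdL (a b d : M) : Prop :=
  LDvd d a ∧ LDvd d b ∧ ∀ c : M, LDvd c a → LDvd c b → LDvd c d

/-- `d` is the greatest common right-divisor of `a` and `b`. -/
def IsGcdR (a b d : M) : Prop :=
  RDvd d a ∧ RDvd d b ∧ ∀ c : M, RDvd c a → RDvd c b → RDvd c d

/-- A preGarside monoid: cancellative, atomic, and any two elements admitting a
common multiple (on the appropriate side) admit a least one. -/
def IsPreGarside (M : Type*) [Monoid M] : Prop :=
  IsCancellative M ∧ IsAtomicMon M ∧
    (∀ a b : M, (∃ c, LDvd a c ∧ LDvd b c) → ∃ m, IsLcmL a b m) ∧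
    (∀ a b : M, (∃ c, RDvd a c ∧ RDvd b c) → ∃ m, IsLcmR a b m)

/-- A submonoid is special if it is closed under factors. -/
def IsSpecial (N : Submonoid M) : Prop := ∀ a b : M, a * b ∈ N → a ∈ N ∧ b ∈ N

/-- A (standard) parabolic submonoid: special and closed under all existing lcms. -/
def IsParabolic (N : Submonoid M) : Prop :=
  IsSpecial N ∧ (∀ a b m : M, a ∈ N → b ∈ N → IsLcmL a b m → m ∈ N) ∧
    ∀ a b m : M, a ∈ N → b ∈ N → IsLcmR a b m → m ∈ N

/-- `b` is a factor of `a`. -/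
def Factor (b a : M) : Prop := ∃ c d : M, a = c * b * d

/-- The set of factors of `a`. -/
def Factors (a : M) : Set M := {b | Factor b a}

/-- An element is balanced when its left-divisors and right-divisors coincide. -/
def IsBalanced (a : M) : Prop := {b : M | LDvd b a} = {b : M | RDvd b a}

/-- A Garside element: balanced, and its factors generate the monoid. -/
def IsGarsideElt (Δ : M) : Prop := IsBalanced Δ ∧ Submonoid.closure (Factors Δ) = ⊤

/-- A Garside monoid: a preGarside monoid possessing a Garside element. -/
def IsGarside (M : Type*) [Monoid M] : Prop := IsPreGarside M ∧ ∃ Δ : M, IsGarsideElt Δ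

/-- The factors of `a` computed inside the submonoid `N`. -/
def FactorsIn (N : Submonoid M) (a : M) : Set M :=
  {b | b ∈ N ∧ ∃ c ∈ N, ∃ d ∈ N, a = c * b * d}

/-- `Δ` is a Garside element of the submonoid `N`: it is balanced in `N` and its
factors in `N` generate `N`. -/
def IsGarsideEltIn (N : Submonoid M) (Δ : M) : Prop :=
  Δ ∈ N ∧ ({b : M | b ∈ N ∧ ∃ c ∈ N, Δ = b * c} = {b : M | b ∈ N ∧ ∃ c ∈ N, Δ = c * b}) ∧
    Submonoid.closure (FactorsIn N Δ) = N

/-- The right coset `g * N` (an `R_N`-class). -/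
def RCoset (N : Submonoid M) (g : M) : Set M := {x | ∃ h ∈ N, x = g * h}

/-- The left coset `N * g` (an `L_N`-class). -/
def LCoset (N : Submonoid M) (g : M) : Set M := {x | ∃ h ∈ N, x = h * g}

/-- `RReduces N B A` : the `R_N`-class `B` reduces in one step to the `R_N`-class `A`,
i.e. `A = g₁ N`, `B = g₂ N` with `g₂ ∈ g₁ N` and `g₁ ∉ g₂ N`. -/
def RReduces (N : Submonoid M) (B A : Set M) : Prop :=
  ∃ g₁ g₂ : M, A = RCoset N g₁ ∧ B = RCoset N g₂ ∧ g₂ ∈ RCoset N g₁ ∧ g₁ ∉ RCoset N g₂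

/-- `LReduces N B A` : the `L_N`-class `B` reduces in one step to the `L_N`-class `A`. -/
def LReduces (N : Submonoid M) (B A : Set M) : Prop :=
  ∃ g₁ g₂ : M, A = LCoset N g₁ ∧ B = LCoset N g₂ ∧ g₂ ∈ LCoset N g₁ ∧ g₁ ∉ LCoset N g₂

/-- `N` has the `R` confluence property: the reduction rule on `R_N`-classes is
Noetherian and locally confluent. -/
def RConfluence (N : Submonoid M) : Prop :=
  (¬ ∃ f : ℕ → Set M, ∀ n : ℕ, RReduces N (f n) (f (n + 1))) ∧
    ∀ C A B : Set M, RReduces N C A → RReduces N C B →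
      ∃ D : Set M, Relation.ReflTransGen (RReduces N) A D ∧
        Relation.ReflTransGen (RReduces N) B D

/-- `N` has the `L` confluence property. -/
def LConfluence (N : Submonoid M) : Prop :=
  (¬ ∃ f : ℕ → Set M, ∀ n : ℕ, LReduces N (f n) (f (n + 1))) ∧
    ∀ C A B : Set M, LReduces N C A → LReduces N C B →
      ∃ D : Set M, Relation.ReflTransGen (LReduces N) A D ∧
        Relation.ReflTransGen (LReduces N) B D

/-- `N` has the confluence property. -/
def Confluence (N : Submonoid M) : Prop := RConfluence N ∧ LConfluence N

/-- The `R_N`-class `C` is minimal: whenever `g` represents `C` and `g = g' * h` with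
`h ∈ N`, one has `g' N = C`. -/
def IsMinimalRCoset (N : Submonoid M) (C : Set M) : Prop :=
  (∃ g : M, C = RCoset N g) ∧
    ∀ g g' h : M, h ∈ N → C = RCoset N g → g = g' * h → RCoset N g' = C

/-- The `L_N`-class `C` is minimal. -/
def IsMinimalLCoset (N : Submonoid M) (C : Set M) : Prop :=
  (∃ g : M, C = LCoset N g) ∧
    ∀ g g' h : M, h ∈ N → C = LCoset N g → g = h * g' → LCoset N g' = C

/-- The set of atoms of `M`. -/
def AtomSet (M : Type*) [Monoid M] : Set M :=
  {a | a ≠ 1 ∧ ∀ b c : M, a = b * c → b = 1 ∨ c = 1}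

/-- `|x|` : the least number of factors of `Δ` needed to write `x` as a product. -/
noncomputable def lenFactors (Δ x : M) : ℕ :=
  sInf {k | ∃ l : List M, l.length = k ∧ (∀ y ∈ l, y ∈ Factors Δ) ∧ l.prod = x}

section Amalgam

variable {M₁ M₂ N : Type*} [Monoid M₁] [Monoid M₂] [Monoid N]

/-- The congruence on the free product `M₁ ∗ M₂` identifying `ι₁ h` with `ι₂ h`
for every `h ∈ N`. -/
def amalgamCon (ι₁ : N →* M₁) (ι₂ : N →* M₂) : Con (Monoid.Coprod M₁ M₂) :=
  conGen fun a b => ∃ h : N, a = Monoid.Coprod.inl (ι₁ h) ∧ b = Monoid.Coprod.inr (ι₂ h)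

/-- The amalgamated product `M₁ *_N M₂` : the pushout of `ι₁ : N →* M₁` and
`ι₂ : N →* M₂` in the category of monoids. -/
def Amalgam (ι₁ : N →* M₁) (ι₂ : N →* M₂) : Type _ := (amalgamCon ι₁ ι₂).Quotient

instance (ι₁ : N →* M₁) (ι₂ : N →* M₂) : Monoid (Amalgam ι₁ ι₂) :=
  inferInstanceAs (Monoid (amalgamCon ι₁ ι₂).Quotient)

/-- The canonical morphism `M₁ →* M₁ *_N M₂`. -/
def amalgamInl (ι₁ : N →* M₁) (ι₂ : N →* M₂) : M₁ →* Amalgam ι₁ ι₂ :=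
  (amalgamCon ι₁ ι₂).mk'.comp Monoid.Coprod.inl

/-- The canonical morphism `M₂ →* M₁ *_N M₂`. -/
def amalgamInr (ι₁ : N →* M₁) (ι₂ : N →* M₂) : M₂ →* Amalgam ι₁ ι₂ :=
  (amalgamCon ι₁ ι₂).mk'.comp Monoid.Coprod.inr

end Amalgam

section Aux

variable {M : Type*} [Monoid M]

private lemma nu_one {ν : M → ℕ} (hadd : ∀ a b : M, ν a + ν b ≤ ν (a * b)) : ν 1 = 0 := by
  have := hadd 1 1; simp at this; omega

private lemma keyL {ν : M → ℕ} (hpos : ∀ a : M, a ≠ 1 → 0 < ν a)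
    (hadd : ∀ a b : M, ν a + ν b ≤ ν (a * b)) {d m : M} (h : LDvd d m) (hle : ν m ≤ ν d) :
    m = d := by
  obtain ⟨c, hc⟩ := h
  have h2 := hadd d c
  rw [← hc] at h2
  have hc1 : c = 1 := by
    by_contra h1
    have := hpos c h1; omega
  rw [hc1, mul_one] at hc; exact hc

private lemma keyR {ν : M → ℕ} (hpos : ∀ a : M, a ≠ 1 → 0 < ν a)
    (hadd : ∀ a b : M, ν a + ν b ≤ ν (a * b)) {d m : M} (h : RDvd d m) (hle : ν m ≤ ν d) :
    m = d := by
  obtain ⟨c, hc⟩ := h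
  have h2 := hadd c d
  rw [← hc] at h2
  have hc1 : c = 1 := by
    by_contra h1
    have := hpos c h1; omega
  rw [hc1, one_mul] at hc; exact hc

private lemma nu_le_of_ldvd {ν : M → ℕ} (hadd : ∀ a b : M, ν a + ν b ≤ ν (a * b))
    {a x : M} (h : LDvd a x) : ν a ≤ ν x := by
  obtain ⟨c, hc⟩ := h
  have := hadd a c; rw [← hc] at this; omega

private lemma nu_le_of_rdvd {ν : M → ℕ} (hadd : ∀ a b : M, ν a + ν b ≤ ν (a * b))
    {a x : M} (h : RDvd a x) : ν a ≤ ν x := by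
  obtain ⟨c, hc⟩ := h
  have := hadd c a; rw [← hc] at this; omega

private lemma exists_gcdL (hM : IsPreGarside M) (X : Set M) (hX : X.Nonempty) :
    ∃ d : M, (∀ x ∈ X, LDvd d x) ∧ ∀ a : M, (∀ x ∈ X, LDvd a x) → LDvd a d := by
  obtain ⟨_, ⟨ν, hpos, hadd⟩, hlcmL, _⟩ := hM
  obtain ⟨x₀, hx₀⟩ := hX
  set S : Set ℕ := ν '' {a : M | ∀ x ∈ X, LDvd a x} with hS
  have hne : S.Nonempty := ⟨ν 1, 1, fun x _ => ⟨x, (one_mul x).symm⟩, rfl⟩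
  have hbdd : BddAbove S := by
    refine ⟨ν x₀, ?_⟩
    rintro n ⟨a, ha, rfl⟩
    exact nu_le_of_ldvd hadd (ha x₀ hx₀)
  obtain ⟨d, hd, hdν⟩ := Nat.sSup_mem hne hbdd
  refine ⟨d, hd, fun a ha => ?_⟩
  obtain ⟨m, hma, hmd, hmle⟩ := hlcmL a d ⟨x₀, ha x₀ hx₀, hd x₀ hx₀⟩
  have hm : ∀ x ∈ X, LDvd m x := fun x hx => hmle x (ha x hx) (hd x hx)
  have hν : ν m ≤ ν d := by
    rw [hdν]; exact le_csSup hbdd ⟨m, hm, rfl⟩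
  have : m = d := keyL hpos hadd hmd hν
  exact this ▸ hma

private lemma exists_gcdR (hM : IsPreGarside M) (X : Set M) (hX : X.Nonempty) :
    ∃ d : M, (∀ x ∈ X, RDvd d x) ∧ ∀ a : M, (∀ x ∈ X, RDvd a x) → RDvd a d := by
  obtain ⟨_, ⟨ν, hpos, hadd⟩, _, hlcmR⟩ := hM
  obtain ⟨x₀, hx₀⟩ := hX
  set S : Set ℕ := ν '' {a : M | ∀ x ∈ X, RDvd a x} with hS
  have hne : S.Nonempty := ⟨ν 1, 1, fun x _ => ⟨x, (mul_one x).symm⟩, rfl⟩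
  have hbdd : BddAbove S := by
    refine ⟨ν x₀, ?_⟩
    rintro n ⟨a, ha, rfl⟩
    exact nu_le_of_rdvd hadd (ha x₀ hx₀)
  obtain ⟨d, hd, hdν⟩ := Nat.sSup_mem hne hbdd
  refine ⟨d, hd, fun a ha => ?_⟩
  obtain ⟨m, hma, hmd, hmle⟩ := hlcmR a d ⟨x₀, ha x₀ hx₀, hd x₀ hx₀⟩
  have hm : ∀ x ∈ X, RDvd m x := fun x hx => hmle x (ha x hx) (hd x hx)
  have hν : ν m ≤ ν d := by
    rw [hdν]; exact le_csSup hbdd ⟨m, hm, rfl⟩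
  have : m = d := keyR hpos hadd hmd hν
  exact this ▸ hma

private lemma exists_lcmL (hM : IsPreGarside M) (X : Set M)
    (h : ∃ a : M, ∀ x ∈ X, LDvd x a) :
    ∃ m : M, (∀ x ∈ X, LDvd x m) ∧ ∀ a : M, (∀ x ∈ X, LDvd x a) → LDvd m a := by
  obtain ⟨_, ⟨ν, hpos, hadd⟩, _, _⟩ := id hM
  obtain ⟨a₀, ha₀⟩ := h
  set S : Set ℕ := ν '' {m : M | ∀ x ∈ X, LDvd x m} with hS
  have hne : S.Nonempty := ⟨ν a₀, a₀, ha₀, rfl⟩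
  obtain ⟨m, hm, hmν⟩ := Nat.sInf_mem hne
  refine ⟨m, hm, fun a ha => ?_⟩
  obtain ⟨d, hdm, hgr⟩ := exists_gcdL hM {m, a} ⟨m, Set.mem_insert _ _⟩
  have hdD : ∀ x ∈ X, LDvd x d := fun x hx =>
    hgr x (by rintro y (rfl | rfl); exacts [hm x hx, ha x hx])
  have hle : ν m ≤ ν d := by rw [hmν]; exact Nat.sInf_le ⟨d, hdD, rfl⟩
  have : m = d := keyL hpos hadd (hdm m (Set.mem_insert _ _)) hle
  exact this ▸ hdm a (Set.mem_insert_iff.mpr (Or.inr rfl))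

private lemma exists_lcmR (hM : IsPreGarside M) (X : Set M)
    (h : ∃ a : M, ∀ x ∈ X, RDvd x a) :
    ∃ m : M, (∀ x ∈ X, RDvd x m) ∧ ∀ a : M, (∀ x ∈ X, RDvd x a) → RDvd m a := by
  obtain ⟨_, ⟨ν, hpos, hadd⟩, _, _⟩ := id hM
  obtain ⟨a₀, ha₀⟩ := h
  set S : Set ℕ := ν '' {m : M | ∀ x ∈ X, RDvd x m} with hS
  have hne : S.Nonempty := ⟨ν a₀, a₀, ha₀, rfl⟩
  obtain ⟨m, hm, hmν⟩ := Nat.sInf_mem hne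
  refine ⟨m, hm, fun a ha => ?_⟩
  obtain ⟨d, hdm, hgr⟩ := exists_gcdR hM {m, a} ⟨m, Set.mem_insert _ _⟩
  have hdD : ∀ x ∈ X, RDvd x d := fun x hx =>
    hgr x (by rintro y (rfl | rfl); exacts [hm x hx, ha x hx])
  have hle : ν m ≤ ν d := by rw [hmν]; exact Nat.sInf_le ⟨d, hdD, rfl⟩
  have : m = d := keyR hpos hadd (hdm m (Set.mem_insert _ _)) hle
  exact this ▸ hdm a (Set.mem_insert_iff.mpr (Or.inr rfl))

end Aux

/-- **Lemma 2.1.** In a preGarside monoid, every nonempty subset `X` has a greatest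
common left-divisor and a greatest common right-divisor, and it has a least common
multiple for left- (resp. right-) divisibility as soon as it has a common multiple. -/
theorem lemma_2_1 {M : Type*} [Monoid M] (hM : IsPreGarside M) (X : Set M)
    (hX : X.Nonempty) :
    (∃ d : M, (∀ x ∈ X, LDvd d x) ∧ ∀ a : M, (∀ x ∈ X, LDvd a x) → LDvd a d) ∧
    (∃ d : M, (∀ x ∈ X, RDvd d x) ∧ ∀ a : M, (∀ x ∈ X, RDvd a x) → RDvd a d) ∧
    ((∃ a : M, ∀ x ∈ X, LDvd x a) →
      ∃ m : M, (∀ x ∈ X, LDvd x m) ∧ ∀ a : M, (∀ x ∈ X, LDvd x a) → LDvd m a) ∧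
    ((∃ a : M, ∀ x ∈ X, RDvd x a) →
      ∃ m : M, (∀ x ∈ X, RDvd x m) ∧ ∀ a : M, (∀ x ∈ X, RDvd x a) → RDvd m a) := by
  exact ⟨exists_gcdL hM X hX, exists_gcdR hM X hX,
    fun h => exists_lcmL hM X h, fun h => exists_lcmR hM X h⟩

end PG
end

section
/- Let M be a preGarside monoid and let N be a parabolic submonoid of M. (1) N is itself a preGarside monoid. (2) For every nonempty subset X of N, the elements ∧_L X and ∧_R X (computed in M) belong to N; similarly, ∨_L X and ∨_R X belong to N whenever they exist in M. -/
namespace PG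

variable {M : Type*} [Monoid M]

section AuxLemma23

variable {M : Type*} [Monoid M]

theorem aux_nu_one (hM : IsPreGarside M) : ∀ ν : M → ℕ,
    ((∀ a : M, a ≠ 1 → 0 < ν a) ∧ ∀ a b : M, ν a + ν b ≤ ν (a * b)) → ν 1 = 0 := by
  intro ν ⟨_, h2⟩
  have := h2 1 1
  rw [mul_one] at this
  omega

theorem aux_mul_eq_one (hM : IsPreGarside M) {c e : M} (h : c * e = 1) : c = 1 ∧ e = 1 := by
  obtain ⟨ν, hν⟩ := hM.2.1
  have h1 := aux_nu_one hM ν hν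
  have h2 := hν.2 c e
  rw [h, h1] at h2
  constructor
  · by_contra hc; have := hν.1 c hc; omega
  · by_contra he; have := hν.1 e he; omega

theorem aux_ldvd_antisymm (hM : IsPreGarside M) {a b : M} (h1 : LDvd a b) (h2 : LDvd b a) :
    a = b := by
  obtain ⟨c, hc⟩ := h1
  obtain ⟨e, he⟩ := h2
  have : a * (c * e) * 1 = a * 1 * 1 := by
    rw [mul_one, mul_one, mul_one, ← mul_assoc, ← hc, ← he]
  have h := hM.1 (c * e) 1 a 1 this
  obtain ⟨hc1, _⟩ := aux_mul_eq_one hM h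
  rw [hc, hc1, mul_one]

theorem aux_rdvd_antisymm (hM : IsPreGarside M) {a b : M} (h1 : RDvd a b) (h2 : RDvd b a) :
    a = b := by
  obtain ⟨c, hc⟩ := h1
  obtain ⟨e, he⟩ := h2
  have : 1 * (e * c) * a = 1 * 1 * a := by
    rw [one_mul, one_mul, one_mul, mul_assoc, ← hc, ← he]
  have h := hM.1 (e * c) 1 1 a this
  obtain ⟨_, hc1⟩ := aux_mul_eq_one hM h
  rw [hc, hc1, one_mul]

theorem aux_lcmL_mem (hM : IsPreGarside M) {N : Submonoid M} (hN : IsParabolic N)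
    {X : Set M} (hXne : X.Nonempty) (hX : X ⊆ (N : Set M)) {m : M}
    (h1 : ∀ x ∈ X, LDvd x m) (h2 : ∀ a : M, (∀ x ∈ X, LDvd x a) → LDvd m a) : m ∈ N := by
  obtain ⟨ν, hν1, hν2⟩ := hM.2.1
  obtain ⟨x₀, hx₀⟩ := hXne
  have key : ∀ n : ℕ, ∀ y : M, y ∈ N → LDvd y m → ν m ≤ ν y + n → m ∈ N := by
    intro n
    induction n with
    | zero =>
      intro y hyN hym hn
      obtain ⟨c, hc⟩ := hym
      have hc1 : c = 1 := by
        by_contra h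
        have := hν1 c h
        have := hν2 y c
        rw [← hc] at this
        omega
      rw [hc, hc1, mul_one]
      exact hyN
    | succ n ih =>
      intro y hyN hym hn
      by_cases hall : ∀ x ∈ X, LDvd x y
      · have hmy := h2 y hall
        rw [aux_ldvd_antisymm hM hmy hym]
        exact hyN
      · push_neg at hall
        obtain ⟨x, hxX, hxy⟩ := hall
        have hxm := h1 x hxX
        obtain ⟨w, hw⟩ := hM.2.2.1 y x ⟨m, hym, hxm⟩
        have hwN : w ∈ N := hN.2.1 y x w hyN (hX hxX) hw
        have hwm : LDvd w m := hw.2.2 m hym hxm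
        obtain ⟨c, hc⟩ := hw.1
        have hc1 : c ≠ 1 := by
          rintro rfl
          rw [mul_one] at hc
          exact hxy (hc ▸ hw.2.1)
        have hνc := hν1 c hc1
        have hνw := hν2 y c
        rw [← hc] at hνw
        exact ih w hwN hwm (by omega)
  exact key (ν m) x₀ (hX hx₀) (h1 x₀ hx₀) (by omega)

theorem aux_lcmR_mem (hM : IsPreGarside M) {N : Submonoid M} (hN : IsParabolic N)
    {X : Set M} (hXne : X.Nonempty) (hX : X ⊆ (N : Set M)) {m : M}
    (h1 : ∀ x ∈ X, RDvd x m) (h2 : ∀ a : M, (∀ x ∈ X, RDvd x a) → RDvd m a) : m ∈ N := by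
  obtain ⟨ν, hν1, hν2⟩ := hM.2.1
  obtain ⟨x₀, hx₀⟩ := hXne
  have key : ∀ n : ℕ, ∀ y : M, y ∈ N → RDvd y m → ν m ≤ ν y + n → m ∈ N := by
    intro n
    induction n with
    | zero =>
      intro y hyN hym hn
      obtain ⟨c, hc⟩ := hym
      have hc1 : c = 1 := by
        by_contra h
        have := hν1 c h
        have := hν2 c y
        rw [← hc] at this
        omega
      rw [hc, hc1, one_mul]
      exact hyN
    | succ n ih =>
      intro y hyN hym hn
      by_cases hall : ∀ x ∈ X, RDvd x y
      · have hmy := h2 y hall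
        rw [aux_rdvd_antisymm hM hmy hym]
        exact hyN
      · push_neg at hall
        obtain ⟨x, hxX, hxy⟩ := hall
        have hxm := h1 x hxX
        obtain ⟨w, hw⟩ := hM.2.2.2 y x ⟨m, hym, hxm⟩
        have hwN : w ∈ N := hN.2.2 y x w hyN (hX hxX) hw
        have hwm : RDvd w m := hw.2.2 m hym hxm
        obtain ⟨c, hc⟩ := hw.1
        have hc1 : c ≠ 1 := by
          rintro rfl
          rw [one_mul] at hc
          exact hxy (hc ▸ hw.2.1)
        have hνc := hν1 c hc1
        have hνw := hν2 c y
        rw [← hc] at hνw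
        exact ih w hwN hwm (by omega)
  exact key (ν m) x₀ (hX hx₀) (h1 x₀ hx₀) (by omega)

end AuxLemma23

/-- **Lemma 2.3.** A parabolic submonoid `N` of a preGarside monoid is itself a
preGarside monoid, and the gcds (and lcms, when they exist) in `M` of nonempty
subsets of `N` belong to `N`. -/
theorem lemma_2_3 {M : Type*} [Monoid M] (hM : IsPreGarside M) (N : Submonoid M)
    (hN : IsParabolic N) :
    IsPreGarside ↥N ∧
    ∀ X : Set M, X.Nonempty → X ⊆ (N : Set M) →
      (∀ d : M, ((∀ x ∈ X, LDvd d x) ∧ ∀ a : M, (∀ x ∈ X, LDvd a x) → LDvd a d) → d ∈ N) ∧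
      (∀ d : M, ((∀ x ∈ X, RDvd d x) ∧ ∀ a : M, (∀ x ∈ X, RDvd a x) → RDvd a d) → d ∈ N) ∧
      (∀ m : M, ((∀ x ∈ X, LDvd x m) ∧ ∀ a : M, (∀ x ∈ X, LDvd x a) → LDvd m a) → m ∈ N) ∧
      (∀ m : M, ((∀ x ∈ X, RDvd x m) ∧ ∀ a : M, (∀ x ∈ X, RDvd x a) → RDvd m a) → m ∈ N) := by
  obtain ⟨hcan, ⟨ν, hν1, hν2⟩, hL, hR⟩ := hM
  have hM' : IsPreGarside M := ⟨hcan, ⟨ν, hν1, hν2⟩, hL, hR⟩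
  constructor
  · refine ⟨?_, ⟨fun a => ν ↑a, ?_, ?_⟩, ?_, ?_⟩
    · intro a b c d h
      exact Subtype.ext (hcan ↑a ↑b ↑c ↑d (by
        have := congrArg (Subtype.val) h
        push_cast at this ⊢
        exact this))
    · intro a ha
      exact hν1 ↑a (fun h => ha (Subtype.ext (by simpa using h)))
    · intro a b
      simpa using hν2 ↑a ↑b
    · -- left lcms in N
      rintro a b ⟨c, ⟨u, hu⟩, ⟨v, hv⟩⟩
      have hac : LDvd (↑a : M) ↑c := ⟨↑u, by rw [hu]; push_cast; ring⟩
      have hbc : LDvd (↑b : M) ↑c := ⟨↑v, by rw [hv]; push_cast; ring⟩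
      obtain ⟨m, hm⟩ := hL ↑a ↑b ⟨↑c, hac, hbc⟩
      have hmN : m ∈ N := hN.2.1 ↑a ↑b m a.2 b.2 hm
      refine ⟨⟨m, hmN⟩, ?_, ?_, ?_⟩
      · obtain ⟨e, he⟩ := hm.1
        exact ⟨⟨e, (hN.1 ↑a e (he ▸ hmN)).2⟩, Subtype.ext (by simpa using he)⟩
      · obtain ⟨e, he⟩ := hm.2.1
        exact ⟨⟨e, (hN.1 ↑b e (he ▸ hmN)).2⟩, Subtype.ext (by simpa using he)⟩
      · rintro d ⟨u, hu⟩ ⟨v, hv⟩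
        obtain ⟨e, he⟩ := hm.2.2 ↑d ⟨↑u, by rw [hu]; push_cast; ring⟩
          ⟨↑v, by rw [hv]; push_cast; ring⟩
        exact ⟨⟨e, (hN.1 m e (he ▸ d.2)).2⟩, Subtype.ext (by simpa using he)⟩
    · -- right lcms in N
      rintro a b ⟨c, ⟨u, hu⟩, ⟨v, hv⟩⟩
      have hac : RDvd (↑a : M) ↑c := ⟨↑u, by rw [hu]; push_cast; ring⟩
      have hbc : RDvd (↑b : M) ↑c := ⟨↑v, by rw [hv]; push_cast; ring⟩
      obtain ⟨m, hm⟩ := hR ↑a ↑b ⟨↑c, hac, hbc⟩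
      have hmN : m ∈ N := hN.2.2 ↑a ↑b m a.2 b.2 hm
      refine ⟨⟨m, hmN⟩, ?_, ?_, ?_⟩
      · obtain ⟨e, he⟩ := hm.1
        exact ⟨⟨e, (hN.1 e ↑a (he ▸ hmN)).1⟩, Subtype.ext (by simpa using he)⟩
      · obtain ⟨e, he⟩ := hm.2.1
        exact ⟨⟨e, (hN.1 e ↑b (he ▸ hmN)).1⟩, Subtype.ext (by simpa using he)⟩
      · rintro d ⟨u, hu⟩ ⟨v, hv⟩
        obtain ⟨e, he⟩ := hm.2.2 ↑d ⟨↑u, by rw [hu]; push_cast; ring⟩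
          ⟨↑v, by rw [hv]; push_cast; ring⟩
        exact ⟨⟨e, (hN.1 e m (he ▸ d.2)).1⟩, Subtype.ext (by simpa using he)⟩
  · intro X hXne hX
    obtain ⟨x₀, hx₀⟩ := hXne
    refine ⟨?_, ?_, ?_, ?_⟩
    · rintro d ⟨hd, -⟩
      obtain ⟨c, hc⟩ := hd x₀ hx₀
      exact (hN.1 d c (hc ▸ hX hx₀)).1
    · rintro d ⟨hd, -⟩
      obtain ⟨c, hc⟩ := hd x₀ hx₀
      exact (hN.1 c d (hc ▸ hX hx₀)).2
    · rintro m ⟨h1, h2⟩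
      exact aux_lcmL_mem hM' hN ⟨x₀, hx₀⟩ hX h1 h2
    · rintro m ⟨h1, h2⟩
      exact aux_lcmR_mem hM' hN ⟨x₀, hx₀⟩ hX h1 h2

end PG
end

section
/- Let M be a Garside monoid, let Δ be a Garside element of M, and let N be a parabolic submonoid of M. Then N has a Garside element (so N is a Garside monoid); moreover, there exists a Garside element Δ_N of N such that Div(Δ_N) = Div(Δ) ∩ N. -/
namespace PG

variable {M : Type*} [Monoid M]

lemma ldvd_trans {a b c : M} (h1 : LDvd a b) (h2 : LDvd b c) : LDvd a c := by
  obtain ⟨x, hx⟩ := h1; obtain ⟨y, hy⟩ := h2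
  exact ⟨x * y, by rw [hy, hx, mul_assoc]⟩

lemma rdvd_trans {a b c : M} (h1 : RDvd a b) (h2 : RDvd b c) : RDvd a c := by
  obtain ⟨x, hx⟩ := h1; obtain ⟨y, hy⟩ := h2
  exact ⟨y * x, by rw [hy, hx, mul_assoc]⟩

/-- **Lemma 2.4 (1).** A parabolic submonoid `N` of a Garside monoid `M` with Garside
element `Δ` is a Garside monoid; moreover `N` has a Garside element `Δ_N` whose set of
factors is `Div Δ ∩ N`. -/
theorem lemma_2_4 {M : Type*} [Monoid M] (hM : IsPreGarside M) (Δ : M)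
    (hΔ : IsGarsideElt Δ) (N : Submonoid M) (hN : IsParabolic N) :
    IsGarside ↥N ∧
    ∃ ΔN : M, IsGarsideEltIn N ΔN ∧ FactorsIn N ΔN = Factors Δ ∩ (N : Set M) := by
  classical
  obtain ⟨hcan, ⟨ν, hν1, hνadd⟩, hLex, hRex⟩ := hM
  obtain ⟨hbal, hgen⟩ := hΔ
  obtain ⟨hspec, hpL, hpR⟩ := hN
  have hLR : ∀ b : M, LDvd b Δ ↔ RDvd b Δ := fun b => Set.ext_iff.mp hbal b
  -- the left-sided candidate for `Δ_N`
  set D : Set M := {d | d ∈ N ∧ LDvd d Δ} with hDdef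
  have h1D : (1 : M) ∈ D := ⟨N.one_mem, Δ, (one_mul Δ).symm⟩
  have hBdd : BddAbove (ν '' D) := by
    refine ⟨ν Δ, ?_⟩
    rintro n ⟨d, ⟨-, c, hc⟩, rfl⟩
    calc ν d ≤ ν d + ν c := Nat.le_add_right _ _
      _ ≤ ν (d * c) := hνadd d c
      _ = ν Δ := by rw [← hc]
  obtain ⟨ΔN, hΔND, hΔNν⟩ : ∃ d ∈ D, ν d = sSup (ν '' D) := by
    have hne : (ν '' D).Nonempty := ⟨ν 1, ⟨1, h1D, rfl⟩⟩
    obtain ⟨d, hd, hdν⟩ := Nat.sSup_mem hne hBdd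
    exact ⟨d, hd, hdν⟩
  have hmax : ∀ d ∈ D, ν d ≤ ν ΔN := fun d hd => hΔNν ▸ le_csSup hBdd ⟨d, hd, rfl⟩
  have hub : ∀ d : M, d ∈ N → LDvd d Δ → LDvd d ΔN := by
    intro d hdN hdΔ
    obtain ⟨m, hm1, hm2, hm3⟩ := hLex d ΔN ⟨Δ, hdΔ, hΔND.2⟩
    have hmN : m ∈ N := hpL d ΔN m hdN hΔND.1 ⟨hm1, hm2, hm3⟩
    have hmΔ : LDvd m Δ := hm3 Δ hdΔ hΔND.2
    obtain ⟨c, hc⟩ := hm2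
    have hc1 : c = 1 := by
      by_contra h
      have h1 := hν1 c h
      have h2 := hνadd ΔN c
      have h3 := hmax m ⟨hmN, hmΔ⟩
      rw [← hc] at h2
      omega
    rw [hc1, mul_one] at hc
    exact hc ▸ hm1
  -- the right-sided candidate
  set DR : Set M := {d | d ∈ N ∧ RDvd d Δ} with hDRdef
  have h1DR : (1 : M) ∈ DR := ⟨N.one_mem, Δ, (mul_one Δ).symm⟩
  have hBddR : BddAbove (ν '' DR) := by
    refine ⟨ν Δ, ?_⟩
    rintro n ⟨d, ⟨-, c, hc⟩, rfl⟩
    calc ν d ≤ ν c + ν d := Nat.le_add_left _ _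
      _ ≤ ν (c * d) := hνadd c d
      _ = ν Δ := by rw [← hc]
  obtain ⟨ΔN', hΔND', hΔNν'⟩ : ∃ d ∈ DR, ν d = sSup (ν '' DR) := by
    have hne : (ν '' DR).Nonempty := ⟨ν 1, ⟨1, h1DR, rfl⟩⟩
    obtain ⟨d, hd, hdν⟩ := Nat.sSup_mem hne hBddR
    exact ⟨d, hd, hdν⟩
  have hmaxR : ∀ d ∈ DR, ν d ≤ ν ΔN' := fun d hd => hΔNν' ▸ le_csSup hBddR ⟨d, hd, rfl⟩
  have hub' : ∀ d : M, d ∈ N → RDvd d Δ → RDvd d ΔN' := by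
    intro d hdN hdΔ
    obtain ⟨m, hm1, hm2, hm3⟩ := hRex d ΔN' ⟨Δ, hdΔ, hΔND'.2⟩
    have hmN : m ∈ N := hpR d ΔN' m hdN hΔND'.1 ⟨hm1, hm2, hm3⟩
    have hmΔ : RDvd m Δ := hm3 Δ hdΔ hΔND'.2
    obtain ⟨c, hc⟩ := hm2
    have hc1 : c = 1 := by
      by_contra h
      have h1 := hν1 c h
      have h2 := hνadd c ΔN'
      have h3 := hmaxR m ⟨hmN, hmΔ⟩
      rw [← hc] at h2
      omega
    rw [hc1, one_mul] at hc
    exact hc ▸ hm1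
  -- the two candidates coincide
  obtain ⟨e, he⟩ := hub' ΔN hΔND.1 ((hLR ΔN).1 hΔND.2)
  obtain ⟨g, hg⟩ := hub ΔN' hΔND'.1 ((hLR ΔN').2 hΔND'.2)
  have hkey : ν e + ν ΔN + ν g ≤ ν ΔN := by
    calc ν e + ν ΔN + ν g ≤ ν (e * ΔN) + ν g := Nat.add_le_add_right (hνadd e ΔN) _
      _ ≤ ν (e * ΔN * g) := hνadd _ _
      _ = ν ΔN := by rw [← he, ← hg]
  have he1 : e = 1 := by
    by_contra h
    have := hν1 e h
    omega
  have heq : ΔN' = ΔN := by rw [he, he1, one_mul]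
  have hub2 : ∀ d : M, d ∈ N → RDvd d Δ → RDvd d ΔN := fun d h1 h2 => heq ▸ hub' d h1 h2
  have hΔNmem : ΔN ∈ N := hΔND.1
  -- divisor characterizations
  have hLch : ∀ b : M, LDvd b ΔN ↔ b ∈ N ∧ LDvd b Δ := by
    intro b
    constructor
    · rintro ⟨c, hc⟩
      exact ⟨(hspec b c (hc ▸ hΔNmem)).1, ldvd_trans ⟨c, hc⟩ hΔND.2⟩
    · rintro ⟨h1, h2⟩; exact hub b h1 h2
  have hRch : ∀ b : M, RDvd b ΔN ↔ b ∈ N ∧ RDvd b Δ := by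
    intro b
    constructor
    · rintro ⟨c, hc⟩
      exact ⟨(hspec c b (hc ▸ hΔNmem)).2,
        rdvd_trans ⟨c, hc⟩ ((hLR ΔN).1 hΔND.2)⟩
    · rintro ⟨h1, h2⟩; exact hub2 b h1 h2
  have hbalN : ∀ b : M, LDvd b ΔN ↔ RDvd b ΔN := by
    intro b; rw [hLch, hRch, hLR]
  -- factors of Δ are exactly its left divisors
  have hfac : ∀ b : M, Factor b Δ ↔ LDvd b Δ := by
    intro b
    constructor
    · rintro ⟨c, d, hcd⟩
      obtain ⟨e, he⟩ := (hLR (b * d)).2 ⟨c, by rw [hcd, mul_assoc]⟩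
      exact ⟨d * e, by rw [he, mul_assoc]⟩
    · rintro ⟨c, hc⟩
      exact ⟨1, c, by rw [one_mul, hc]⟩
  -- factors of Δ_N inside N are the factors of Δ lying in N
  have hFrac : FactorsIn N ΔN = Factors Δ ∩ (N : Set M) := by
    ext b
    constructor
    · rintro ⟨hbN, c, hcN, d, hdN, hcd⟩
      have h2 : RDvd (b * d) Δ := ((hRch _).1 ⟨c, by rw [hcd, mul_assoc]⟩).2
      obtain ⟨e, he⟩ := (hLR (b * d)).2 h2
      exact ⟨(hfac b).2 ⟨d * e, by rw [he, mul_assoc]⟩, hbN⟩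
    · rintro ⟨hbF, hbN⟩
      obtain ⟨c, hc⟩ := hub b hbN ((hfac b).1 hbF)
      have hcN : c ∈ N := (hspec b c (hc ▸ hΔNmem)).2
      exact ⟨hbN, 1, N.one_mem, c, hcN, by rw [one_mul]; exact hc⟩
  -- entries of a product lying in N lie in N
  have hmemN : ∀ l : List M, l.prod ∈ N → ∀ y ∈ l, y ∈ N := by
    intro l
    induction l with
    | nil => intro _ y hy; simp at hy
    | cons a t ih =>
      intro hp y hy
      rw [List.prod_cons] at hp
      obtain ⟨haN, htN⟩ := hspec a t.prod hp
      rcases List.mem_cons.mp hy with rfl | hy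
      · exact haN
      · exact ih htN y hy
  -- generation
  have hgenN : Submonoid.closure (FactorsIn N ΔN) = N := by
    apply le_antisymm
    · exact Submonoid.closure_le.mpr fun b hb => hb.1
    · intro x hx
      have hx1 : x ∈ Submonoid.closure (Factors Δ) := by rw [hgen]; trivial
      obtain ⟨l, hl, hlp⟩ := Submonoid.exists_list_of_mem_closure hx1
      have hxl : l.prod ∈ N := by rw [hlp]; exact hx
      have hmem : l.prod ∈ Submonoid.closure (FactorsIn N ΔN) := by
        apply list_prod_mem
        intro y hy
        apply Submonoid.subset_closure
        rw [hFrac]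
        exact ⟨hl y hy, hmemN l hxl y hy⟩
      rw [hlp] at hmem; exact hmem
  -- transfer of divisibility to the subtype
  have hcoe_ldvd : ∀ a b : ↥N, LDvd a b ↔ LDvd (a : M) (b : M) := by
    intro a b
    constructor
    · rintro ⟨c, hc⟩
      exact ⟨c, by rw [hc]; rfl⟩
    · rintro ⟨c, hc⟩
      have hcN : c ∈ N := (hspec (a : M) c (hc ▸ b.2)).2
      exact ⟨⟨c, hcN⟩, Subtype.ext hc⟩
  have hcoe_rdvd : ∀ a b : ↥N, RDvd a b ↔ RDvd (a : M) (b : M) := by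
    intro a b
    constructor
    · rintro ⟨c, hc⟩
      exact ⟨c, by rw [hc]; rfl⟩
    · rintro ⟨c, hc⟩
      have hcN : c ∈ N := (hspec c (a : M) (hc ▸ b.2)).1
      exact ⟨⟨c, hcN⟩, Subtype.ext hc⟩
  -- N is preGarside
  have hcanN : IsCancellative ↥N := by
    intro a b c d h
    exact Subtype.ext (hcan (a : M) b c d (by exact_mod_cast congrArg Subtype.val h))
  have hatomN : IsAtomicMon ↥N := by
    refine ⟨fun a => ν a, fun a ha => hν1 (a : M) ?_, fun a b => hνadd (a : M) b⟩
    intro h; exact ha (Subtype.ext h)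
  have hLexN : ∀ a b : ↥N, (∃ c, LDvd a c ∧ LDvd b c) → ∃ m, IsLcmL a b m := by
    rintro a b ⟨c, hac, hbc⟩
    obtain ⟨m, hm1, hm2, hm3⟩ :=
      hLex (a : M) b ⟨c, (hcoe_ldvd a c).1 hac, (hcoe_ldvd b c).1 hbc⟩
    have hmN : m ∈ N := hpL _ _ m a.2 b.2 ⟨hm1, hm2, hm3⟩
    refine ⟨⟨m, hmN⟩, (hcoe_ldvd _ _).2 hm1, (hcoe_ldvd _ _).2 hm2, fun d had hbd => ?_⟩
    exact (hcoe_ldvd _ _).2 (hm3 _ ((hcoe_ldvd _ _).1 had) ((hcoe_ldvd _ _).1 hbd))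
  have hRexN : ∀ a b : ↥N, (∃ c, RDvd a c ∧ RDvd b c) → ∃ m, IsLcmR a b m := by
    rintro a b ⟨c, hac, hbc⟩
    obtain ⟨m, hm1, hm2, hm3⟩ :=
      hRex (a : M) b ⟨c, (hcoe_rdvd a c).1 hac, (hcoe_rdvd b c).1 hbc⟩
    have hmN : m ∈ N := hpR _ _ m a.2 b.2 ⟨hm1, hm2, hm3⟩
    refine ⟨⟨m, hmN⟩, (hcoe_rdvd _ _).2 hm1, (hcoe_rdvd _ _).2 hm2, fun d had hbd => ?_⟩
    exact (hcoe_rdvd _ _).2 (hm3 _ ((hcoe_rdvd _ _).1 had) ((hcoe_rdvd _ _).1 hbd))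
  -- Δ_N is a Garside element of the subtype monoid
  have hgarN : IsGarsideElt (⟨ΔN, hΔNmem⟩ : ↥N) := by
    constructor
    · ext b
      simp only [Set.mem_setOf_eq]
      rw [hcoe_ldvd, hcoe_rdvd]
      exact hbalN (b : M)
    · have key : ∀ l : List M, (∀ y ∈ l, y ∈ FactorsIn N ΔN) → ∀ hp : l.prod ∈ N,
          (⟨l.prod, hp⟩ : ↥N) ∈ Submonoid.closure (Factors (⟨ΔN, hΔNmem⟩ : ↥N)) := by
        intro l
        induction l with
        | nil =>
          intro _ hp
          have h1 : (⟨List.prod [], hp⟩ : ↥N) = 1 := Subtype.ext (by simp)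
          rw [h1]; exact Submonoid.one_mem _
        | cons a t ih =>
          intro hmem hp
          have hp' := hp
          rw [List.prod_cons] at hp'
          obtain ⟨haN, htN⟩ := hspec a t.prod hp'
          have h1 : (⟨(a :: t).prod, hp⟩ : ↥N) = ⟨a, haN⟩ * ⟨t.prod, htN⟩ :=
            Subtype.ext (by simp)
          rw [h1]
          apply mul_mem
          · apply Submonoid.subset_closure
            obtain ⟨-, c, hcN, d, hdN, hcd⟩ := hmem a List.mem_cons_self
            exact ⟨⟨c, hcN⟩, ⟨d, hdN⟩, Subtype.ext hcd⟩
          · exact ih (fun y hy => hmem y (List.mem_cons_of_mem _ hy)) htN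
      rw [eq_top_iff]
      rintro ⟨x, hx⟩ -
      have hx' : x ∈ Submonoid.closure (FactorsIn N ΔN) := by rw [hgenN]; exact hx
      obtain ⟨l, hl, hlp⟩ := Submonoid.exists_list_of_mem_closure hx'
      have hpN : l.prod ∈ N := by rw [hlp]; exact hx
      have h2 : (⟨x, hx⟩ : ↥N) = ⟨l.prod, hpN⟩ := Subtype.ext hlp.symm
      rw [h2]
      exact key l hl hpN
  refine ⟨⟨⟨hcanN, hatomN, hLexN, hRexN⟩, ⟨ΔN, hΔNmem⟩, hgarN⟩,
    ΔN, ⟨hΔNmem, ?_, hgenN⟩, hFrac⟩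
  ext b
  simp only [Set.mem_setOf_eq]
  constructor
  · rintro ⟨hb, c, hcN, hbc⟩
    obtain ⟨c', hc'⟩ := (hbalN b).1 ⟨c, hbc⟩
    exact ⟨hb, c', (hspec c' b (hc' ▸ hΔNmem)).1, hc'⟩
  · rintro ⟨hb, c, hcN, hbc⟩
    obtain ⟨c', hc'⟩ := (hbalN b).2 ⟨c, hbc⟩
    exact ⟨hb, c', (hspec b c' (hc' ▸ hΔNmem)).2, hc'⟩

end PG
end

section
/- Let M be a preGarside monoid, let S be a generating set for M that does not contain 1, and let f_L be a left selector on S in M. Then M is isomorphic, as a monoid, to the monoid M_L(Γ_L, f_L) presented by generating set S and relations x·f_L(x,y) = y·f_L(y,x) for each edge {x,y} of Γ_L; that is, these relations form a monoid presentation of M on S. -/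
namespace PG

variable {M : Type*} [Monoid M]

/-- **Theorem 2.6.** Let `M` be a preGarside monoid, `S` a generating set of `M` not
containing `1`, and `f_L` a left selector on `S` in `M`. Then the natural morphism
`π : S* → M` is surjective and two words have the same image iff they are congruent
modulo the relations `x · f_L(x,y) = y · f_L(y,x)` for the edges `{x,y}` of `Γ_L`;
that is, `M ≅ M_L(Γ_L, f_L)`. -/
theorem theorem_2_6 {M : Type*} [Monoid M] (hM : IsPreGarside M) (S : Set M)
    (hgen : Submonoid.closure S = ⊤) (h1 : (1 : M) ∉ S)
    (fL : ↥S → ↥S → FreeMonoid ↥S)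
    (hfL : ∀ x y : ↥S, x ≠ y → (∃ m : M, IsLcmL (x : M) (y : M) m) →
      IsLcmL (x : M) (y : M)
        (FreeMonoid.lift (fun s : ↥S => (s : M)) (FreeMonoid.of x * fL x y)) ∧
      IsLcmL (x : M) (y : M)
        (FreeMonoid.lift (fun s : ↥S => (s : M)) (FreeMonoid.of y * fL y x))) :
    Function.Surjective (FreeMonoid.lift (fun s : ↥S => (s : M))) ∧
    ∀ u v : FreeMonoid ↥S,
      FreeMonoid.lift (fun s : ↥S => (s : M)) u = FreeMonoid.lift (fun s : ↥S => (s : M)) v ↔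
      (conGen fun u' v' : FreeMonoid ↥S => ∃ x y : ↥S, x ≠ y ∧
        (∃ m : M, IsLcmL (x : M) (y : M) m) ∧
        u' = FreeMonoid.of x * fL x y ∧ v' = FreeMonoid.of y * fL y x) u v := by

  classical
  obtain ⟨hcan, ⟨ν, hν1, hνm⟩, hlcm, -⟩ := hM
  set π : FreeMonoid ↥S →* M := FreeMonoid.lift (fun s : ↥S => (s : M)) with hπdef
  set r : FreeMonoid ↥S → FreeMonoid ↥S → Prop := fun u' v' => ∃ x y : ↥S, x ≠ y ∧
        (∃ m : M, IsLcmL (x : M) (y : M) m) ∧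
        u' = FreeMonoid.of x * fL x y ∧ v' = FreeMonoid.of y * fL y x with hrdef
  -- basic facts
  have lcancel : ∀ a b c : M, a * b = a * c → b = c := by
    intro a b c h
    exact hcan b c a 1 (by simpa using h)
  have hν1' : ν 1 = 0 := by
    have := hνm 1 1
    simp only [mul_one] at this
    omega
  have hone : ∀ a : M, ν a = 0 → a = 1 := by
    intro a ha
    by_contra h
    have := hν1 a h
    omega
  have hx1 : ∀ x : ↥S, (x : M) ≠ 1 := by
    intro x hx
    exact h1 (hx ▸ x.2)
  have hlcmuniq : ∀ a b m m' : M, IsLcmL a b m → IsLcmL a b m' → m = m' := by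
    rintro a b m m' ⟨ha, hb, hmin⟩ ⟨ha', hb', hmin'⟩
    obtain ⟨c, hc⟩ := hmin m' ha' hb'
    obtain ⟨d, hd⟩ := hmin' m ha hb
    have hmc : m * (c * d) = m * 1 := by
      rw [← mul_assoc, ← hc, ← hd, mul_one]
    have hcd : c * d = 1 := lcancel _ _ _ hmc
    have hcle := hνm c d
    rw [hcd, hν1'] at hcle
    have hc0 : c = 1 := hone c (by omega)
    rw [hc, hc0, mul_one]
  -- surjectivity
  have hsurj : Function.Surjective π := by
    intro m
    have hm : m ∈ Submonoid.closure S := hgen ▸ Submonoid.mem_top m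
    induction hm using Submonoid.closure_induction with
    | mem x hx => exact ⟨FreeMonoid.of ⟨x, hx⟩, by simp [hπdef]⟩
    | one => exact ⟨1, map_one π⟩
    | mul a b _ _ ha hb =>
        obtain ⟨u, rfl⟩ := ha
        obtain ⟨v, rfl⟩ := hb
        exact ⟨u * v, map_mul π u v⟩
  have hcases : ∀ u : FreeMonoid ↥S, u = 1 ∨ ∃ x u', u = FreeMonoid.of x * u' := by
    intro u
    induction u using FreeMonoid.recOn with
    | one => exact Or.inl rfl
    | of_mul x xs _ => exact Or.inr ⟨x, xs, rfl⟩
  -- the main induction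
  have key : ∀ n : ℕ, ∀ u v : FreeMonoid ↥S, ν (π u) < n → π u = π v → conGen r u v := by
    intro n
    induction n with
    | zero => intro u v h; exact absurd h (Nat.not_lt_zero _)
    | succ n ih =>
      intro u v hn huv
      rcases hcases u with rfl | ⟨x, u', rfl⟩
      · rcases hcases v with rfl | ⟨y, v', rfl⟩
        · exact (conGen r).refl 1
        · exfalso
          have h2 : (1 : M) = (y : M) * π v' := by simpa [map_one, hπdef] using huv
          have h3 := hνm (y : M) (π v')
          have h4 := hν1 (y : M) (hx1 y)
          rw [← h2, hν1'] at h3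
          omega
      · rcases hcases v with rfl | ⟨y, v', rfl⟩
        · exfalso
          have h2 : (x : M) * π u' = 1 := by simpa [map_one, hπdef] using huv
          have h3 := hνm (x : M) (π u')
          have h4 := hν1 (x : M) (hx1 x)
          rw [h2, hν1'] at h3
          omega
        · have hu : π (FreeMonoid.of x * u') = (x : M) * π u' := by simp [hπdef]
          have hv : π (FreeMonoid.of y * v') = (y : M) * π v' := by simp [hπdef]
          have hnu : ν (π u') < n := by
            have h3 := hνm (x : M) (π u')
            have h4 := hν1 (x : M) (hx1 x)
            rw [← hu] at h3
            omega
          have hnv : ν (π v') < n := by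
            have h3 := hνm (y : M) (π v')
            have h4 := hν1 (y : M) (hx1 y)
            rw [← hv, ← huv] at h3
            omega
          by_cases hxy : x = y
          · subst hxy
            have : π u' = π v' := by
              apply lcancel (x : M)
              rw [← hu, ← hv, huv]
            exact (conGen r).mul ((conGen r).refl (FreeMonoid.of x)) (ih u' v' hnu this)
          · -- x ≠ y : use the lcm
            have hcm : ∃ c : M, LDvd (x : M) c ∧ LDvd (y : M) c := by
              refine ⟨π (FreeMonoid.of x * u'), ⟨π u', hu⟩, ⟨π v', ?_⟩⟩
              rw [huv]; exact hv
            obtain ⟨hL1, hL2⟩ := hfL x y hxy (hlcm _ _ hcm)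
            set m : M := π (FreeMonoid.of x * fL x y) with hmdef
            have hmeq : π (FreeMonoid.of y * fL y x) = m :=
              hlcmuniq _ _ _ _ hL2 hL1
            have hmdvd : LDvd m (π (FreeMonoid.of x * u')) := by
              refine hL1.2.2 _ ⟨π u', hu⟩ ⟨π v', ?_⟩
              rw [huv]; exact hv
            obtain ⟨t, ht⟩ := hmdvd
            obtain ⟨w, hw⟩ := hsurj t
            have hmx : m = (x : M) * π (fL x y) := by simp [hmdef, hπdef]
            have hmy : m = (y : M) * π (fL y x) := by rw [← hmeq]; simp [hπdef]
            have hu' : π u' = π (fL x y * w) := by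
              apply lcancel (x : M)
              rw [← hu, ht, hmx, map_mul, hw, mul_assoc]
            have hv' : π v' = π (fL y x * w) := by
              apply lcancel (y : M)
              rw [← hv, ← huv, ht, hmy, map_mul, hw, mul_assoc]
            have cu : conGen r u' (fL x y * w) := ih _ _ hnu hu'
            have cv : conGen r v' (fL y x * w) := ih _ _ hnv hv'
            have crel : conGen r (FreeMonoid.of x * fL x y) (FreeMonoid.of y * fL y x) :=
              ConGen.Rel.of _ _ ⟨x, y, hxy, hlcm _ _ hcm, rfl, rfl⟩
            have e1 : conGen r (FreeMonoid.of x * u')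
                ((FreeMonoid.of x * fL x y) * w) := by
              rw [mul_assoc]
              exact (conGen r).mul ((conGen r).refl _) cu
            have e2 : conGen r ((FreeMonoid.of x * fL x y) * w)
                ((FreeMonoid.of y * fL y x) * w) :=
              (conGen r).mul crel ((conGen r).refl w)
            have e3 : conGen r ((FreeMonoid.of y * fL y x) * w)
                (FreeMonoid.of y * v') := by
              rw [mul_assoc]
              exact (conGen r).mul ((conGen r).refl _) ((conGen r).symm cv)
            exact (conGen r).trans ((conGen r).trans e1 e2) e3
  refine ⟨hsurj, fun u v => ⟨fun h => key (ν (π u) + 1) u v (Nat.lt_succ_self _) h, fun h => ?_⟩⟩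
  have hle : conGen r ≤ Con.ker π := by
    apply Con.conGen_le.mpr
    rintro a b ⟨x, y, hxy, hm, rfl, rfl⟩
    rw [Con.ker_rel]
    obtain ⟨hL1, hL2⟩ := hfL x y hxy hm
    exact hlcmuniq _ _ _ _ hL1 hL2
  exact (Con.ker_rel π).mp (hle h)


end PG
end

section
/- Let M1 *_N M2 be a special amalgam of monoids. Then the canonical morphisms j1 : M1 → M1 *_N M2 and j2 : M2 → M1 *_N M2 are injective; the submonoids j1(M1), j2(M2), and j1(ι1(N)) are special submonoids of M1 *_N M2; and j1(M1) ∩ j2(M2) = j1(ι1(N)) = j2(ι2(N)). -/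
namespace PG

variable {M : Type*} [Monoid M]

section Prop31Aux

open Monoid

/-! ### Auxiliary machinery for Proposition 3.1 -/

open scoped Classical in
/-- A monoid hom `M →* T` sending the special submonoid `R` to `1` and its
complement to a fixed idempotent `e`. -/
noncomputable def sHom {M T : Type*} [Monoid M] [Monoid T] (R : Submonoid M)
    (hR : IsSpecial R) (e : T) (he : e * e = e) : M →* T where
  toFun a := if a ∈ R then 1 else e
  map_one' := if_pos R.one_mem
  map_mul' a b := by
    show (if a * b ∈ R then (1 : T) else e) =
      (if a ∈ R then (1 : T) else e) * (if b ∈ R then (1 : T) else e)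
    by_cases ha : a ∈ R <;> by_cases hb : b ∈ R
    · rw [if_pos (R.mul_mem ha hb), if_pos ha, if_pos hb, one_mul]
    · rw [if_neg (fun h => hb ((hR a b h).2)), if_pos ha, if_neg hb, one_mul]
    · rw [if_neg (fun h => ha ((hR a b h).1)), if_neg ha, if_pos hb, mul_one]
    · rw [if_neg (fun h => ha ((hR a b h).1)), if_neg ha, if_neg hb, he]

theorem sHom_mem {M T : Type*} [Monoid M] [Monoid T] {R : Submonoid M}
    (hR : IsSpecial R) (e : T) (he : e * e = e) {a : M} (ha : a ∈ R) :
    sHom R hR e he a = 1 := by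
  simp only [sHom, MonoidHom.coe_mk, OneHom.coe_mk]
  exact if_pos ha

theorem sHom_not_mem {M T : Type*} [Monoid M] [Monoid T] {R : Submonoid M}
    (hR : IsSpecial R) (e : T) (he : e * e = e) {a : M} (ha : a ∉ R) :
    sHom R hR e he a = e := by
  simp only [sHom, MonoidHom.coe_mk, OneHom.coe_mk]
  exact if_neg ha

section LiftInd

variable {M₁ M₂ N : Type*} [Monoid M₁] [Monoid M₂] [Monoid N]
variable (ι₁ : N →* M₁) (ι₂ : N →* M₂)

/-- The universal property of the amalgam. -/
def amalgamLift {T : Type*} [Monoid T] (f₁ : M₁ →* T) (f₂ : M₂ →* T)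
    (hf : ∀ h : N, f₁ (ι₁ h) = f₂ (ι₂ h)) : Amalgam ι₁ ι₂ →* T :=
  Con.lift _ (Monoid.Coprod.lift f₁ f₂) (by
    refine Con.conGen_le.2 ?_
    rintro a b ⟨h, rfl, rfl⟩
    simp only [Con.ker_rel, Monoid.Coprod.lift_apply_inl, Monoid.Coprod.lift_apply_inr, hf])

theorem amalgamLift_inl {T : Type*} [Monoid T] (f₁ : M₁ →* T) (f₂ : M₂ →* T)
    (hf : ∀ h : N, f₁ (ι₁ h) = f₂ (ι₂ h)) (a : M₁) :
    amalgamLift ι₁ ι₂ f₁ f₂ hf (amalgamInl ι₁ ι₂ a) = f₁ a := by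
  show Con.lift _ _ _ ((amalgamCon ι₁ ι₂).mk' (Monoid.Coprod.inl a)) = f₁ a
  erw [Con.lift_mk', Monoid.Coprod.lift_apply_inl]

theorem amalgamLift_inr {T : Type*} [Monoid T] (f₁ : M₁ →* T) (f₂ : M₂ →* T)
    (hf : ∀ h : N, f₁ (ι₁ h) = f₂ (ι₂ h)) (b : M₂) :
    amalgamLift ι₁ ι₂ f₁ f₂ hf (amalgamInr ι₁ ι₂ b) = f₂ b := by
  show Con.lift _ _ _ ((amalgamCon ι₁ ι₂).mk' (Monoid.Coprod.inr b)) = f₂ b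
  erw [Con.lift_mk', Monoid.Coprod.lift_apply_inr]

theorem amalgam_rel (h : N) :
    amalgamInl ι₁ ι₂ (ι₁ h) = amalgamInr ι₁ ι₂ (ι₂ h) := by
  show (amalgamCon ι₁ ι₂).mk' (Monoid.Coprod.inl (ι₁ h)) =
    (amalgamCon ι₁ ι₂).mk' (Monoid.Coprod.inr (ι₂ h))
  exact (Con.eq _).mpr (ConGen.Rel.of _ _ ⟨h, rfl, rfl⟩)

theorem amalgam_induction (C : Amalgam ι₁ ι₂ → Prop)
    (h1 : ∀ a, C (amalgamInl ι₁ ι₂ a)) (h2 : ∀ b, C (amalgamInr ι₁ ι₂ b))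
    (hmul : ∀ x y, C x → C y → C (x * y)) : ∀ z, C z := by
  intro z
  obtain ⟨w, rfl⟩ := Con.mk'_surjective (c := amalgamCon ι₁ ι₂) z
  induction w using Monoid.Coprod.induction_on with
  | inl a => exact h1 a
  | inr b => exact h2 b
  | mul x y hx hy => rw [map_mul]; exact hmul _ _ hx hy

end LiftInd

/-! ### The counting endomorphisms -/

/-- Resets the state to `some false`, keeping the counter. -/
def setF : Function.End (Option Bool × ℕ) := fun p => (some false, p.2)

/-- Sets the state to `some true`, incrementing the counter unless the state
was already `some true`. -/
def bump : Function.End (Option Bool × ℕ) :=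
  fun p => (some true, p.2 + if p.1 = some true then 0 else 1)

theorem setF_idem : setF * setF = setF := rfl

theorem bump_idem : bump * bump = bump := by
  funext p
  show bump (bump p) = bump p
  simp [bump]

/-- The invariant satisfied by all endomorphisms in the range of the counting
representation of the amalgam. -/
def GoodEnd (φ : Function.End (Option Bool × ℕ)) : Prop :=
  (∀ st n, φ (st, n) = ((φ (st, 0)).1, n + (φ (st, 0)).2)) ∧
  (φ (none, 0) = φ (some false, 0) ∨ φ = 1) ∧
  (∀ st n, (φ (st, n)).1 = some true →
    n + (if st = some true then 0 else 1) ≤ (φ (st, n)).2)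

theorem goodEnd_one : GoodEnd 1 := by
  refine ⟨fun st n => rfl, Or.inr rfl, fun st n h => ?_⟩
  show n + _ ≤ n
  have : st = some true := h
  simp [this]

theorem goodEnd_setF : GoodEnd setF := by
  refine ⟨fun st n => rfl, Or.inl rfl, fun st n h => ?_⟩
  simp [setF] at h

theorem goodEnd_bump : GoodEnd bump := by
  refine ⟨fun st n => by simp [bump], Or.inl (by simp [bump]), fun st n _ => le_refl _⟩

theorem goodEnd_mul {φ ψ : Function.End (Option Bool × ℕ)}
    (hφ : GoodEnd φ) (hψ : GoodEnd ψ) : GoodEnd (φ * ψ) := by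
  obtain ⟨P1, P2, P3⟩ := hφ
  obtain ⟨Q1, Q2, Q3⟩ := hψ
  refine ⟨?_, ?_, ?_⟩
  · intro st n
    show φ (ψ (st, n)) = ((φ (ψ (st, 0))).1, n + (φ (ψ (st, 0))).2)
    rw [Q1 st n, P1 (ψ (st, 0)).1 (n + (ψ (st, 0)).2)]
    have h0 : φ (ψ (st, 0)) = φ ((ψ (st, 0)).1, (ψ (st, 0)).2) := rfl
    rw [h0, P1 (ψ (st, 0)).1 (ψ (st, 0)).2]
    simp [Nat.add_assoc]
  · rcases Q2 with hQ | hQ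
    · rcases P2 with hP | hP
      · left
        show φ (ψ (none, 0)) = φ (ψ (some false, 0))
        rw [hQ]
      · left
        rw [hP]
        show ψ (none, 0) = ψ (some false, 0)
        exact hQ
    · rw [hQ, mul_one]
      exact P2
  · intro st n h
    have hmono : ∀ (st' : Option Bool) (m : ℕ), m ≤ (ψ (st', m)).2 := by
      intro st' m
      rw [Q1 st' m]
      exact Nat.le_add_right _ _
    set p := ψ (st, n) with hp
    have happ : (φ * ψ) (st, n) = φ (p.1, p.2) := rfl
    rw [happ] at h ⊢
    by_cases hp1 : p.1 = some true
    · have h2 := Q3 st n hp1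
      have h3 := P3 p.1 p.2 h
      calc n + (if st = some true then 0 else 1) ≤ p.2 := h2
        _ ≤ p.2 + (if p.1 = some true then 0 else 1) := Nat.le_add_right _ _
        _ ≤ (φ (p.1, p.2)).2 := h3
    · have h3 := P3 p.1 p.2 h
      have h4 : p.2 + 1 ≤ (φ (p.1, p.2)).2 := by
        simpa [hp1] using h3
      have h5 : n ≤ p.2 := hmono st n
      have : n + (if st = some true then 0 else 1) ≤ n + 1 := by
        split <;> omega
      omega

/-- The key combinatorial step: if the counter of a product vanishes at the
base point, then it vanishes for both factors. -/
theorem goodEnd_key {φ ψ : Function.End (Option Bool × ℕ)}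
    (hφ : GoodEnd φ) (hψ : GoodEnd ψ) (h : ((φ * ψ) (none, 0)).2 = 0) :
    (φ (none, 0)).2 = 0 ∧ (ψ (none, 0)).2 = 0 := by
  obtain ⟨P1, P2, P3⟩ := hφ
  obtain ⟨Q1, Q2, Q3⟩ := hψ
  set p := ψ (none, 0) with hp
  have happ : (φ * ψ) (none, 0) = φ (p.1, p.2) := rfl
  rw [happ] at h
  have hsplit : (φ (p.1, p.2)).2 = p.2 + (φ (p.1, 0)).2 := by
    rw [P1 p.1 p.2]
  have hp2 : p.2 = 0 := by omega
  have hφ2 : (φ (p.1, 0)).2 = 0 := by omega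
  refine ⟨?_, hp2⟩
  have hp1 : p.1 ≠ some true := by
    intro hc
    have h7 := Q3 none 0 hc
    rw [← hp] at h7
    simp at h7
    omega
  match hq : p.1 with
  | none => rw [hq] at hφ2; exact hφ2
  | some false =>
    rw [hq] at hφ2
    rcases P2 with hP | hP
    · rw [hP]; exact hφ2
    · rw [hP]; rfl
  | some true => exact absurd hq hp1

end Prop31Aux

section Theta

variable {M M' N : Type*} [Monoid M] [Monoid M'] [Monoid N]
variable (ι : N →* M) (ι' : N →* M')

open scoped Classical in
/-- A partial retraction `M' → M` along the common submonoid `N`. -/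
noncomputable def preimg (b : M') : M :=
  if hb : ∃ y : N, ι' y = b then ι hb.choose else 1

theorem preimg_eq (hι' : Function.Injective ι') (h : N) :
    preimg ι ι' (ι' h) = ι h := by
  have hb : ∃ y : N, ι' y = ι' h := ⟨h, rfl⟩
  rw [preimg, dif_pos hb]
  exact congrArg ι (hι' hb.choose_spec)

theorem preimg_mul (hι' : Function.Injective ι') {b b' : M'}
    (hb : b ∈ MonoidHom.mrange ι') (hb' : b' ∈ MonoidHom.mrange ι') :
    preimg ι ι' (b * b') = preimg ι ι' b * preimg ι ι' b' := by
  obtain ⟨h, rfl⟩ := MonoidHom.mem_mrange.1 hb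
  obtain ⟨h', rfl⟩ := MonoidHom.mem_mrange.1 hb'
  rw [← map_mul, preimg_eq ι ι' hι', preimg_eq ι ι' hι', preimg_eq ι ι' hι', map_mul]

/-- `M` acting on `Option M` by left multiplication. -/
def thetaSelf : M →* Function.End (Option M) where
  toFun a := Option.map (a * ·)
  map_one' := by
    funext o
    cases o with
    | none => rfl
    | some m => show some (1 * m) = some m; rw [one_mul]
  map_mul' a b := by
    funext o
    cases o with
    | none => rfl
    | some m => show some (a * b * m) = some (a * (b * m)); rw [mul_assoc]

open scoped Classical in
/-- `M'` acting on `Option M` : elements of `N` act by left multiplication through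
the retraction, everything else collapses to `none`. -/
noncomputable def thetaOther (hι' : Function.Injective ι')
    (hs' : IsSpecial (MonoidHom.mrange ι')) : M' →* Function.End (Option M) where
  toFun b := if b ∈ MonoidHom.mrange ι' then Option.map (preimg ι ι' b * ·) else fun _ => none
  map_one' := by
    show ((if (1 : M') ∈ MonoidHom.mrange ι' then
      Option.map (preimg ι ι' 1 * ·) else fun _ => none : Function.End (Option M))) = 1
    erw [if_pos (one_mem _)]
    have h1 : preimg ι ι' ((1 : M')) = 1 := by
      have := preimg_eq ι ι' hι' 1
      simpa using this
    funext o
    cases o with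
    | none => rfl
    | some m =>
        show some (preimg ι ι' 1 * m) = some m
        rw [h1, one_mul]
  map_mul' b b' := by
    show ((if b * b' ∈ MonoidHom.mrange ι' then
        Option.map (preimg ι ι' (b * b') * ·) else fun _ => none : Function.End (Option M))) =
      ((if b ∈ MonoidHom.mrange ι' then
        Option.map (preimg ι ι' b * ·) else fun _ => none : Function.End (Option M))) *
      ((if b' ∈ MonoidHom.mrange ι' then
        Option.map (preimg ι ι' b' * ·) else fun _ => none : Function.End (Option M)))
    by_cases hb : b ∈ MonoidHom.mrange ι' <;> by_cases hb' : b' ∈ MonoidHom.mrange ι'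
    · erw [if_pos (mul_mem hb hb'), if_pos hb, if_pos hb', preimg_mul ι ι' hι' hb hb']
      funext o
      cases o with
      | none => rfl
      | some m =>
        show some (preimg ι ι' b * preimg ι ι' b' * m)
          = some (preimg ι ι' b * (preimg ι ι' b' * m))
        rw [mul_assoc]
    · erw [if_neg (fun h => hb' ((hs' _ _ h).2)), if_neg hb', if_pos hb]
      funext o; rfl
    · erw [if_neg (fun h => hb ((hs' _ _ h).1)), if_neg hb, if_pos hb']
      funext o
      cases o <;> rfl
    · erw [if_neg (fun h => hb ((hs' _ _ h).1)), if_neg hb, if_neg hb']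
      funext o; rfl

theorem thetaOther_apply_range (hι' : Function.Injective ι')
    (hs' : IsSpecial (MonoidHom.mrange ι')) (h : N) :
    thetaOther ι ι' hι' hs' (ι' h) = Option.map (ι h * ·) := by
  simp only [thetaOther, MonoidHom.coe_mk, OneHom.coe_mk]
  erw [if_pos (MonoidHom.mem_mrange.2 ⟨h, rfl⟩), preimg_eq ι ι' hι']

end Theta

section Main

variable {M₁ M₂ N : Type*} [Monoid M₁] [Monoid M₂] [Monoid N]
variable (ι₁ : N →* M₁) (ι₂ : N →* M₂)

/-- The counting representation adapted to `M₁`. -/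
noncomputable def psiL (hs₁ : IsSpecial (MonoidHom.mrange ι₁))
    (hs₂ : IsSpecial (MonoidHom.mrange ι₂)) :
    Amalgam ι₁ ι₂ →* Function.End (Option Bool × ℕ) :=
  amalgamLift ι₁ ι₂ (sHom _ hs₁ setF setF_idem) (sHom _ hs₂ bump bump_idem)
    (fun h => by
      rw [sHom_mem hs₁ setF setF_idem (MonoidHom.mem_mrange.2 ⟨h, rfl⟩),
        sHom_mem hs₂ bump bump_idem (MonoidHom.mem_mrange.2 ⟨h, rfl⟩)])

/-- The counting representation adapted to `M₂`. -/
noncomputable def psiR (hs₁ : IsSpecial (MonoidHom.mrange ι₁))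
    (hs₂ : IsSpecial (MonoidHom.mrange ι₂)) :
    Amalgam ι₁ ι₂ →* Function.End (Option Bool × ℕ) :=
  amalgamLift ι₁ ι₂ (sHom _ hs₁ bump bump_idem) (sHom _ hs₂ setF setF_idem)
    (fun h => by
      rw [sHom_mem hs₁ bump bump_idem (MonoidHom.mem_mrange.2 ⟨h, rfl⟩),
        sHom_mem hs₂ setF setF_idem (MonoidHom.mem_mrange.2 ⟨h, rfl⟩)])

variable (hs₁ : IsSpecial (MonoidHom.mrange ι₁)) (hs₂ : IsSpecial (MonoidHom.mrange ι₂))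

theorem psiL_good : ∀ z, GoodEnd (psiL ι₁ ι₂ hs₁ hs₂ z) := by
  refine amalgam_induction ι₁ ι₂ _ ?_ ?_ ?_
  · intro a
    rw [psiL, amalgamLift_inl]
    by_cases ha : a ∈ MonoidHom.mrange ι₁
    · rw [sHom_mem hs₁ setF setF_idem ha]; exact goodEnd_one
    · rw [sHom_not_mem hs₁ setF setF_idem ha]; exact goodEnd_setF
  · intro b
    rw [psiL, amalgamLift_inr]
    by_cases hb : b ∈ MonoidHom.mrange ι₂
    · rw [sHom_mem hs₂ bump bump_idem hb]; exact goodEnd_one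
    · rw [sHom_not_mem hs₂ bump bump_idem hb]; exact goodEnd_bump
  · intro x y hx hy
    rw [map_mul]
    exact goodEnd_mul hx hy

theorem psiR_good : ∀ z, GoodEnd (psiR ι₁ ι₂ hs₁ hs₂ z) := by
  refine amalgam_induction ι₁ ι₂ _ ?_ ?_ ?_
  · intro a
    rw [psiR, amalgamLift_inl]
    by_cases ha : a ∈ MonoidHom.mrange ι₁
    · rw [sHom_mem hs₁ bump bump_idem ha]; exact goodEnd_one
    · rw [sHom_not_mem hs₁ bump bump_idem ha]; exact goodEnd_bump
  · intro b
    rw [psiR, amalgamLift_inr]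
    by_cases hb : b ∈ MonoidHom.mrange ι₂
    · rw [sHom_mem hs₂ setF setF_idem hb]; exact goodEnd_one
    · rw [sHom_not_mem hs₂ setF setF_idem hb]; exact goodEnd_setF
  · intro x y hx hy
    rw [map_mul]
    exact goodEnd_mul hx hy

theorem mem_mrange_inl_iff (z : Amalgam ι₁ ι₂) :
    z ∈ MonoidHom.mrange (amalgamInl ι₁ ι₂) ↔
      (psiL ι₁ ι₂ hs₁ hs₂ z (none, 0)).2 = 0 := by
  constructor
  · rintro hz
    obtain ⟨a, rfl⟩ := MonoidHom.mem_mrange.1 hz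
    rw [psiL, amalgamLift_inl]
    by_cases ha : a ∈ MonoidHom.mrange ι₁
    · rw [sHom_mem hs₁ setF setF_idem ha]; rfl
    · rw [sHom_not_mem hs₁ setF setF_idem ha]; rfl
  · refine amalgam_induction ι₁ ι₂
      (fun z => (psiL ι₁ ι₂ hs₁ hs₂ z (none, 0)).2 = 0 →
        z ∈ MonoidHom.mrange (amalgamInl ι₁ ι₂)) ?_ ?_ ?_ z
    · intro a _
      exact MonoidHom.mem_mrange.2 ⟨a, rfl⟩
    · intro b hb0
      by_cases hb : b ∈ MonoidHom.mrange ι₂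
      · obtain ⟨h, rfl⟩ := MonoidHom.mem_mrange.1 hb
        rw [← amalgam_rel ι₁ ι₂ h]
        exact MonoidHom.mem_mrange.2 ⟨ι₁ h, rfl⟩
      · exfalso
        rw [psiL, amalgamLift_inr, sHom_not_mem hs₂ bump bump_idem hb] at hb0
        simp [bump] at hb0
    · intro x y hx hy hxy
      rw [map_mul] at hxy
      obtain ⟨h1, h2⟩ := goodEnd_key (psiL_good ι₁ ι₂ hs₁ hs₂ x)
        (psiL_good ι₁ ι₂ hs₁ hs₂ y) hxy
      exact mul_mem (hx h1) (hy h2)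

theorem mem_mrange_inr_iff (z : Amalgam ι₁ ι₂) :
    z ∈ MonoidHom.mrange (amalgamInr ι₁ ι₂) ↔
      (psiR ι₁ ι₂ hs₁ hs₂ z (none, 0)).2 = 0 := by
  constructor
  · rintro hz
    obtain ⟨b, rfl⟩ := MonoidHom.mem_mrange.1 hz
    rw [psiR, amalgamLift_inr]
    by_cases hb : b ∈ MonoidHom.mrange ι₂
    · rw [sHom_mem hs₂ setF setF_idem hb]; rfl
    · rw [sHom_not_mem hs₂ setF setF_idem hb]; rfl
  · refine amalgam_induction ι₁ ι₂
      (fun z => (psiR ι₁ ι₂ hs₁ hs₂ z (none, 0)).2 = 0 →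
        z ∈ MonoidHom.mrange (amalgamInr ι₁ ι₂)) ?_ ?_ ?_ z
    · intro a ha0
      by_cases ha : a ∈ MonoidHom.mrange ι₁
      · obtain ⟨h, rfl⟩ := MonoidHom.mem_mrange.1 ha
        rw [amalgam_rel ι₁ ι₂ h]
        exact MonoidHom.mem_mrange.2 ⟨ι₂ h, rfl⟩
      · exfalso
        rw [psiR, amalgamLift_inl, sHom_not_mem hs₁ bump bump_idem ha] at ha0
        simp [bump] at ha0
    · intro b _
      exact MonoidHom.mem_mrange.2 ⟨b, rfl⟩
    · intro x y hx hy hxy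
      rw [map_mul] at hxy
      obtain ⟨h1, h2⟩ := goodEnd_key (psiR_good ι₁ ι₂ hs₁ hs₂ x)
        (psiR_good ι₁ ι₂ hs₁ hs₂ y) hxy
      exact mul_mem (hx h1) (hy h2)

/-- The characteristic homomorphism to `(ℕ, *)` detecting `N`. -/
noncomputable def chiHom : Amalgam ι₁ ι₂ →* ℕ :=
  amalgamLift ι₁ ι₂ (sHom _ hs₁ (0 : ℕ) (by norm_num)) (sHom _ hs₂ (0 : ℕ) (by norm_num))
    (fun h => by
      rw [sHom_mem hs₁ (0 : ℕ) (by norm_num) (MonoidHom.mem_mrange.2 ⟨h, rfl⟩),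
        sHom_mem hs₂ (0 : ℕ) (by norm_num) (MonoidHom.mem_mrange.2 ⟨h, rfl⟩)])

theorem mem_mrange_comp_iff (z : Amalgam ι₁ ι₂) :
    z ∈ MonoidHom.mrange ((amalgamInl ι₁ ι₂).comp ι₁) ↔ chiHom ι₁ ι₂ hs₁ hs₂ z = 1 := by
  constructor
  · rintro hz
    obtain ⟨h, rfl⟩ := MonoidHom.mem_mrange.1 hz
    rw [MonoidHom.comp_apply, chiHom, amalgamLift_inl]
    exact sHom_mem hs₁ (0 : ℕ) (by norm_num) (MonoidHom.mem_mrange.2 ⟨h, rfl⟩)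
  · refine amalgam_induction ι₁ ι₂
      (fun z => chiHom ι₁ ι₂ hs₁ hs₂ z = 1 →
        z ∈ MonoidHom.mrange ((amalgamInl ι₁ ι₂).comp ι₁)) ?_ ?_ ?_ z
    · intro a ha
      rw [chiHom, amalgamLift_inl] at ha
      by_cases h : a ∈ MonoidHom.mrange ι₁
      · obtain ⟨n, rfl⟩ := MonoidHom.mem_mrange.1 h
        exact MonoidHom.mem_mrange.2 ⟨n, rfl⟩
      · rw [sHom_not_mem hs₁ (0 : ℕ) (by norm_num) h] at ha
        exact absurd ha (by norm_num)
    · intro b hb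
      rw [chiHom, amalgamLift_inr] at hb
      by_cases h : b ∈ MonoidHom.mrange ι₂
      · obtain ⟨n, rfl⟩ := MonoidHom.mem_mrange.1 h
        rw [← amalgam_rel ι₁ ι₂ n]
        exact MonoidHom.mem_mrange.2 ⟨n, rfl⟩
      · rw [sHom_not_mem hs₂ (0 : ℕ) (by norm_num) h] at hb
        exact absurd hb (by norm_num)
    · intro x y hx hy hxy
      rw [map_mul] at hxy
      exact mul_mem (hx (Nat.eq_one_of_mul_eq_one_right hxy))
        (hy (Nat.eq_one_of_mul_eq_one_left hxy))

end Main

section MainProof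

variable {M₁ M₂ N : Type*} [Monoid M₁] [Monoid M₂] [Monoid N]
variable (ι₁ : N →* M₁) (ι₂ : N →* M₂)

theorem amalgamInl_injective (hι₂ : Function.Injective ι₂)
    (hs₂ : IsSpecial (MonoidHom.mrange ι₂)) :
    Function.Injective (amalgamInl ι₁ ι₂) := by
  intro a a' h
  have agr : ∀ n : N, thetaSelf (ι₁ n) = thetaOther ι₁ ι₂ hι₂ hs₂ (ι₂ n) :=
    fun n => (thetaOther_apply_range ι₁ ι₂ hι₂ hs₂ n).symm
  have h2 : amalgamLift ι₁ ι₂ thetaSelf (thetaOther ι₁ ι₂ hι₂ hs₂) agr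
        (amalgamInl ι₁ ι₂ a) (some 1)
      = amalgamLift ι₁ ι₂ thetaSelf (thetaOther ι₁ ι₂ hι₂ hs₂) agr
        (amalgamInl ι₁ ι₂ a') (some 1) := by
    rw [h]
  rw [amalgamLift_inl, amalgamLift_inl] at h2
  have h3 : some (a * 1) = some (a' * 1) := h2
  simpa using h3

theorem amalgamInr_injective (hι₁ : Function.Injective ι₁)
    (hs₁ : IsSpecial (MonoidHom.mrange ι₁)) :
    Function.Injective (amalgamInr ι₁ ι₂) := by
  intro b b' h
  have agr : ∀ n : N, thetaOther ι₂ ι₁ hι₁ hs₁ (ι₁ n) = thetaSelf (ι₂ n) :=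
    fun n => thetaOther_apply_range ι₂ ι₁ hι₁ hs₁ n
  have h2 : amalgamLift ι₁ ι₂ (thetaOther ι₂ ι₁ hι₁ hs₁) thetaSelf agr
        (amalgamInr ι₁ ι₂ b) (some 1)
      = amalgamLift ι₁ ι₂ (thetaOther ι₂ ι₁ hι₁ hs₁) thetaSelf agr
        (amalgamInr ι₁ ι₂ b') (some 1) := by
    rw [h]
  rw [amalgamLift_inr, amalgamLift_inr] at h2
  have h3 : some (b * 1) = some (b' * 1) := h2
  simpa using h3

end MainProof

/-- **Proposition 3.1.** For a special amalgam `M₁ *_N M₂`, the canonical morphisms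
`j₁ : M₁ → M₁ *_N M₂` and `j₂ : M₂ → M₁ *_N M₂` are injective, the submonoids
`j₁(M₁)`, `j₂(M₂)` and `j₁(ι₁(N))` are special, and
`j₁(M₁) ∩ j₂(M₂) = j₁(ι₁(N)) = j₂(ι₂(N))`. -/
theorem proposition_3_1 {M₁ M₂ N : Type*} [Monoid M₁] [Monoid M₂] [Monoid N]
    (ι₁ : N →* M₁) (ι₂ : N →* M₂)
    (hι₁ : Function.Injective ι₁) (hι₂ : Function.Injective ι₂)
    (hs₁ : IsSpecial (MonoidHom.mrange ι₁)) (hs₂ : IsSpecial (MonoidHom.mrange ι₂)) :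
    Function.Injective (amalgamInl ι₁ ι₂) ∧ Function.Injective (amalgamInr ι₁ ι₂) ∧
    IsSpecial (MonoidHom.mrange (amalgamInl ι₁ ι₂)) ∧
    IsSpecial (MonoidHom.mrange (amalgamInr ι₁ ι₂)) ∧
    IsSpecial (MonoidHom.mrange ((amalgamInl ι₁ ι₂).comp ι₁)) ∧
    MonoidHom.mrange (amalgamInl ι₁ ι₂) ⊓ MonoidHom.mrange (amalgamInr ι₁ ι₂) =
      MonoidHom.mrange ((amalgamInl ι₁ ι₂).comp ι₁) ∧
    MonoidHom.mrange ((amalgamInl ι₁ ι₂).comp ι₁) =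
      MonoidHom.mrange ((amalgamInr ι₁ ι₂).comp ι₂) := by
  have hrel : ∀ h : N, amalgamInl ι₁ ι₂ (ι₁ h) = amalgamInr ι₁ ι₂ (ι₂ h) :=
    amalgam_rel ι₁ ι₂
  refine ⟨amalgamInl_injective ι₁ ι₂ hι₂ hs₂, amalgamInr_injective ι₁ ι₂ hι₁ hs₁,
    ?_, ?_, ?_, ?_, ?_⟩
  · -- specialness of j₁(M₁)
    intro x y hxy
    rw [mem_mrange_inl_iff ι₁ ι₂ hs₁ hs₂, map_mul] at hxy
    obtain ⟨h1, h2⟩ := goodEnd_key (psiL_good ι₁ ι₂ hs₁ hs₂ x)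
      (psiL_good ι₁ ι₂ hs₁ hs₂ y) hxy
    exact ⟨(mem_mrange_inl_iff ι₁ ι₂ hs₁ hs₂ x).2 h1,
      (mem_mrange_inl_iff ι₁ ι₂ hs₁ hs₂ y).2 h2⟩
  · -- specialness of j₂(M₂)
    intro x y hxy
    rw [mem_mrange_inr_iff ι₁ ι₂ hs₁ hs₂, map_mul] at hxy
    obtain ⟨h1, h2⟩ := goodEnd_key (psiR_good ι₁ ι₂ hs₁ hs₂ x)
      (psiR_good ι₁ ι₂ hs₁ hs₂ y) hxy
    exact ⟨(mem_mrange_inr_iff ι₁ ι₂ hs₁ hs₂ x).2 h1,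
      (mem_mrange_inr_iff ι₁ ι₂ hs₁ hs₂ y).2 h2⟩
  · -- specialness of j₁(ι₁(N))
    intro x y hxy
    rw [mem_mrange_comp_iff ι₁ ι₂ hs₁ hs₂, map_mul] at hxy
    exact ⟨(mem_mrange_comp_iff ι₁ ι₂ hs₁ hs₂ x).2 (Nat.eq_one_of_mul_eq_one_right hxy),
      (mem_mrange_comp_iff ι₁ ι₂ hs₁ hs₂ y).2 (Nat.eq_one_of_mul_eq_one_left hxy)⟩
  · -- intersection
    apply le_antisymm
    · rintro z hz
      obtain ⟨hz1, hz2⟩ := Submonoid.mem_inf.1 hz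
      obtain ⟨a, rfl⟩ := MonoidHom.mem_mrange.1 hz1
      by_cases ha : a ∈ MonoidHom.mrange ι₁
      · obtain ⟨h, rfl⟩ := MonoidHom.mem_mrange.1 ha
        exact MonoidHom.mem_mrange.2 ⟨h, rfl⟩
      · exfalso
        obtain ⟨b, hb⟩ := MonoidHom.mem_mrange.1 hz2
        have hpsi : psiL ι₁ ι₂ hs₁ hs₂ (amalgamInr ι₁ ι₂ b)
            = psiL ι₁ ι₂ hs₁ hs₂ (amalgamInl ι₁ ι₂ a) := by rw [hb]
        rw [psiL, amalgamLift_inl, amalgamLift_inr,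
          sHom_not_mem hs₁ setF setF_idem ha] at hpsi
        by_cases hbm : b ∈ MonoidHom.mrange ι₂
        · rw [sHom_mem hs₂ bump bump_idem hbm] at hpsi
          have h5 := congrFun hpsi ((none : Option Bool), (0 : ℕ))
          have h6 : (none : Option Bool) = some false := congrArg Prod.fst h5
          simp at h6
        · rw [sHom_not_mem hs₂ bump bump_idem hbm] at hpsi
          have h5 := congrFun hpsi ((none : Option Bool), (0 : ℕ))
          have h6 : (some true : Option Bool) = some false := congrArg Prod.fst h5
          simp at h6
    · rintro z hz
      obtain ⟨h, rfl⟩ := MonoidHom.mem_mrange.1 hz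
      refine Submonoid.mem_inf.2 ⟨MonoidHom.mem_mrange.2 ⟨ι₁ h, rfl⟩,
        MonoidHom.mem_mrange.2 ⟨ι₂ h, (hrel h).symm⟩⟩
  · -- j₁(ι₁(N)) = j₂(ι₂(N))
    apply le_antisymm
    · rintro z hz
      obtain ⟨h, rfl⟩ := MonoidHom.mem_mrange.1 hz
      exact MonoidHom.mem_mrange.2 ⟨h, (hrel h).symm⟩
    · rintro z hz
      obtain ⟨h, rfl⟩ := MonoidHom.mem_mrange.1 hz
      exact MonoidHom.mem_mrange.2 ⟨h, hrel h⟩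

end PG
end
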